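/- For every real x, one has √π · x · e^{x²} · erfc(x) ≤ 1 (Mill's ratio inequality). -/

import Mathlib

open MeasureTheory Real

noncomputable def erfc (x : ℝ) : ℝ :=
  (2 / Real.sqrt π) * ∫ t in Set.Ioi x, Real.exp (-t ^ 2)

lemma integrable_gauss (x : ℝ) : IntegrableOn (fun t : ℝ => Real.exp (-t ^ 2)) (Set.Ioi x) := by
  have h : Integrable (fun t : ℝ => Real.exp (-(1 : ℝ) * t ^ 2)) :=
    integrable_exp_neg_mul_sq one_pos
  simpa using h.integrableOn

lemma integrable_tgauss (x : ℝ) :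
    IntegrableOn (fun t : ℝ => t * Real.exp (-t ^ 2)) (Set.Ioi x) := by
  have h : Integrable (fun t : ℝ => t * Real.exp (-(1 : ℝ) * t ^ 2)) :=
    integrable_mul_exp_neg_mul_sq one_pos
  simpa using h.integrableOn

lemma integral_tgauss (x : ℝ) :
    ∫ t in Set.Ioi x, t * Real.exp (-t ^ 2) = Real.exp (-x ^ 2) / 2 := by
  have hderiv : ∀ t : ℝ, HasDerivAt (fun t : ℝ => -Real.exp (-t ^ 2) / 2)
      (t * Real.exp (-t ^ 2)) t := by
    intro t
    have h1 : HasDerivAt (fun t : ℝ => -t ^ 2) (-(2 * t)) t := by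
      simpa using ((hasDerivAt_pow 2 t).fun_neg)
    have h2 : HasDerivAt (fun t : ℝ => -Real.exp (-t ^ 2) / 2)
        (-(Real.exp (-t ^ 2) * -(2 * t)) / 2) t := (h1.exp).fun_neg.div_const 2
    convert h2 using 1
    ring
  have htend : Filter.Tendsto (fun t : ℝ => -Real.exp (-t ^ 2) / 2) Filter.atTop (nhds 0) := by
    have h1 : Filter.Tendsto (fun t : ℝ => -t ^ 2) Filter.atTop Filter.atBot :=
      Filter.tendsto_neg_atTop_atBot.comp (Filter.tendsto_pow_atTop two_ne_zero)
    have h2 := Real.tendsto_exp_atBot.comp h1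
    have h3 := h2.neg.div_const 2
    simpa using h3
  have := integral_Ioi_of_hasDerivAt_of_tendsto
    (f := fun t : ℝ => -Real.exp (-t ^ 2) / 2)
    (f' := fun t : ℝ => t * Real.exp (-t ^ 2))
    ((hderiv x).continuousAt.continuousWithinAt)
    (fun t _ => hderiv t) (integrable_tgauss x) htend
  rw [this]; ring

theorem mills_ratio (x : ℝ) :
    Real.sqrt π * x * Real.exp (x ^ 2) * erfc x ≤ 1 := by
  have hπ : (0 : ℝ) < Real.sqrt π := Real.sqrt_pos.mpr Real.pi_pos
  have hI : (0 : ℝ) ≤ ∫ t in Set.Ioi x, Real.exp (-t ^ 2) :=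
    integral_nonneg fun t => (Real.exp_pos _).le
  unfold erfc
  have hkey : Real.sqrt π * x * Real.exp (x ^ 2) *
      ((2 / Real.sqrt π) * ∫ t in Set.Ioi x, Real.exp (-t ^ 2)) =
      2 * x * Real.exp (x ^ 2) * ∫ t in Set.Ioi x, Real.exp (-t ^ 2) := by
    field_simp
  rw [hkey]
  rcases le_or_gt x 0 with hx | hx
  · have : 2 * x * Real.exp (x ^ 2) * ∫ t in Set.Ioi x, Real.exp (-t ^ 2) ≤ 0 := by
      apply mul_nonpos_of_nonpos_of_nonneg _ hI
      have : 2 * x ≤ 0 := by linarith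
      exact mul_nonpos_of_nonpos_of_nonneg this (Real.exp_pos _).le
    linarith
  · have hmono : (∫ t in Set.Ioi x, Real.exp (-t ^ 2)) ≤
        ∫ t in Set.Ioi x, (t / x) * Real.exp (-t ^ 2) := by
      simp_rw [div_mul_eq_mul_div]
      apply setIntegral_mono_on (integrable_gauss x)
        ((integrable_tgauss x).div_const x) measurableSet_Ioi
      intro t ht
      rw [Set.mem_Ioi] at ht
      have htx : 1 ≤ t / x := (one_le_div hx).mpr ht.le
      calc Real.exp (-t ^ 2) = 1 * Real.exp (-t ^ 2) := (one_mul _).symm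
        _ ≤ (t / x) * Real.exp (-t ^ 2) :=
            mul_le_mul_of_nonneg_right htx (Real.exp_pos _).le
        _ = t * Real.exp (-t ^ 2) / x := by ring
    have hval : (∫ t in Set.Ioi x, (t / x) * Real.exp (-t ^ 2)) =
        Real.exp (-x ^ 2) / (2 * x) := by
      have : (∫ t in Set.Ioi x, (t / x) * Real.exp (-t ^ 2)) =
          (1 / x) * ∫ t in Set.Ioi x, t * Real.exp (-t ^ 2) := by
        rw [← integral_const_mul]
        congr 1; ext t; ring
      rw [this, integral_tgauss]
      field_simp
    calc 2 * x * Real.exp (x ^ 2) * ∫ t in Set.Ioi x, Real.exp (-t ^ 2)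
        ≤ 2 * x * Real.exp (x ^ 2) * (Real.exp (-x ^ 2) / (2 * x)) := by
          apply mul_le_mul_of_nonneg_left (hval ▸ hmono)
          positivity
      _ = 1 := by
          rw [div_eq_mul_inv]
          have : Real.exp (x ^ 2) * Real.exp (-x ^ 2) = 1 := by
            rw [← Real.exp_add]; simp
          field_simp
          nlinarith [this]
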